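/- Let A be a symmetric positive definite n×n real matrix with condition number κ(A) = λ_max(A)/λ_min(A), and let C ≥ 1. Then the minimum of κ(S·A·S) over all symmetric positive definite matrices S with κ(S) ≤ C equals max{κ(A)/C², 1}. -/

import Mathlib

open Matrix

/-- Condition number of a matrix: ratio of largest to smallest eigenvalue
(via the spectrum). -/
noncomputable def condNum {n : ℕ} (A : Matrix (Fin n) (Fin n) ℝ) : ℝ :=
  sSup (spectrum ℝ A) / sInf (spectrum ℝ A)

namespace CondNumAux

variable {n : ℕ}

lemma conj_diag_sub (U : Matrix.unitaryGroup (Fin n) ℝ) (d e : Fin n → ℝ) (h : d ≤ e)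
    (x : Fin n → ℝ) :
    x ⬝ᵥ (((U : Matrix (Fin n) (Fin n) ℝ) * diagonal d * star (U : Matrix (Fin n) (Fin n) ℝ)) *ᵥ x)
      ≤ x ⬝ᵥ (((U : Matrix (Fin n) (Fin n) ℝ) * diagonal e *
          star (U : Matrix (Fin n) (Fin n) ℝ)) *ᵥ x) := by
  set Um : Matrix (Fin n) (Fin n) ℝ := (U : Matrix (Fin n) (Fin n) ℝ)
  have hpsd : (Um * diagonal e * star Um - Um * diagonal d * star Um).PosSemidef := by
    have hd : (diagonal (e - d)).PosSemidef :=
      PosSemidef.diagonal (by intro i; simpa using sub_nonneg.mpr (h i))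
    have h2 := hd.mul_mul_conjTranspose_same Um
    rw [show diagonal (e - d) = diagonal e - diagonal d from by rw [diagonal_sub]; rfl,
      Matrix.mul_sub, Matrix.sub_mul] at h2
    simpa [star_eq_conjTranspose] using h2
  have h0 := hpsd.dotProduct_mulVec_nonneg x
  simp only [sub_mulVec, dotProduct_sub, star_trivial] at h0
  linarith

lemma smul_one_conj (U : Matrix.unitaryGroup (Fin n) ℝ) (c : ℝ) :
    (c • (1 : Matrix (Fin n) (Fin n) ℝ)) =
      (U : Matrix (Fin n) (Fin n) ℝ) * diagonal (fun _ => c) *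
        star (U : Matrix (Fin n) (Fin n) ℝ) := by
  have h1 : (U : Matrix (Fin n) (Fin n) ℝ) * star (U : Matrix (Fin n) (Fin n) ℝ) = 1 :=
    (Matrix.mem_unitaryGroup_iff).mp U.2
  rw [← smul_one_eq_diagonal, Matrix.mul_smul, Matrix.mul_one, Matrix.smul_mul, h1]

lemma conj_mul (U : Matrix.unitaryGroup (Fin n) ℝ) (d e : Fin n → ℝ) :
    ((U : Matrix (Fin n) (Fin n) ℝ) * diagonal d * star (U : Matrix (Fin n) (Fin n) ℝ)) *
      ((U : Matrix (Fin n) (Fin n) ℝ) * diagonal e * star (U : Matrix (Fin n) (Fin n) ℝ))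
    = (U : Matrix (Fin n) (Fin n) ℝ) * diagonal (fun i => d i * e i) *
        star (U : Matrix (Fin n) (Fin n) ℝ) := by
  set Um : Matrix (Fin n) (Fin n) ℝ := (U : Matrix (Fin n) (Fin n) ℝ)
  have h1 : star Um * Um = 1 := (Matrix.mem_unitaryGroup_iff').mp U.2
  simp only [Matrix.mul_assoc]
  rw [← Matrix.mul_assoc (star Um) Um, h1, Matrix.one_mul,
    ← Matrix.mul_assoc (diagonal d) (diagonal e), diagonal_mul_diagonal]

lemma conj_quad (S A : Matrix (Fin n) (Fin n) ℝ) (hS : S.IsHermitian) (x : Fin n → ℝ) :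
    x ⬝ᵥ ((S * A * S) *ᵥ x) = (S *ᵥ x) ⬝ᵥ (A *ᵥ (S *ᵥ x)) := by
  have hvm : x ᵥ* S = S *ᵥ x := by
    have := star_mulVec (M := S) (v := x)
    simp only [star_trivial, hS.eq] at this
    exact this.symm
  rw [Matrix.mul_assoc, ← Matrix.mulVec_mulVec, Matrix.dotProduct_mulVec, hvm,
    ← Matrix.mulVec_mulVec]

lemma eigvec_exists (A : Matrix (Fin n) (Fin n) ℝ) (hA : A.IsHermitian) (i : Fin n) :
    ∃ v : Fin n → ℝ, v ≠ 0 ∧ A *ᵥ v = hA.eigenvalues i • v := by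
  refine ⟨⇑(hA.eigenvectorBasis i), ?_, hA.mulVec_eigenvectorBasis i⟩
  have h := hA.eigenvectorBasis.orthonormal.ne_zero i
  intro hc
  exact h (by ext j; exact congrFun hc j)

lemma posdef_conj {A B : Matrix (Fin n) (Fin n) ℝ} (hA : A.PosDef) (hB : IsUnit B) :
    (Bᴴ * A * B).PosDef := by
  refine .of_dotProduct_mulVec_pos (isHermitian_conjTranspose_mul_mul _ hA.1) fun x hx => ?_
  have hBx : B *ᵥ x ≠ 0 := fun h => hx <|
    Matrix.mulVec_injective_iff_isUnit.mpr hB (a₁ := x) (a₂ := 0)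
      (by simpa [Matrix.mulVec_zero] using h)
  simpa only [star_mulVec, dotProduct_mulVec, vecMul_vecMul, Matrix.mul_assoc]
    using hA.dotProduct_mulVec_pos hBx

lemma isGreatest_spec (hn : 1 ≤ n) {B : Matrix (Fin n) (Fin n) ℝ} (hB : B.IsHermitian) :
    IsGreatest (spectrum ℝ B) (sSup (spectrum ℝ B)) := by
  have hne : (spectrum ℝ B).Nonempty := by
    rw [hB.spectrum_real_eq_range_eigenvalues]; exact ⟨_, ⟨⟨0, hn⟩, rfl⟩⟩
  exact ⟨hne.csSup_mem (Matrix.finite_real_spectrum (A := B)),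
    fun x hx => le_csSup (Matrix.finite_real_spectrum (A := B)).bddAbove hx⟩

lemma isLeast_spec (hn : 1 ≤ n) {B : Matrix (Fin n) (Fin n) ℝ} (hB : B.IsHermitian) :
    IsLeast (spectrum ℝ B) (sInf (spectrum ℝ B)) := by
  have hne : (spectrum ℝ B).Nonempty := by
    rw [hB.spectrum_real_eq_range_eigenvalues]; exact ⟨_, ⟨⟨0, hn⟩, rfl⟩⟩
  exact ⟨hne.csInf_mem (Matrix.finite_real_spectrum (A := B)),
    fun x hx => csInf_le (Matrix.finite_real_spectrum (A := B)).bddBelow hx⟩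

lemma sInf_spec_pos (hn : 1 ≤ n) {B : Matrix (Fin n) (Fin n) ℝ} (hB : B.PosDef) :
    0 < sInf (spectrum ℝ B) := by
  obtain ⟨i, hi⟩ : sInf (spectrum ℝ B) ∈ Set.range hB.1.eigenvalues := by
    rw [← hB.1.spectrum_real_eq_range_eigenvalues]
    exact (isLeast_spec hn hB.1).1
  rw [← hi]
  exact hB.eigenvalues_pos i

lemma spectral_real {B : Matrix (Fin n) (Fin n) ℝ} (hB : B.IsHermitian) :
    B = (hB.eigenvectorUnitary : Matrix (Fin n) (Fin n) ℝ) * diagonal hB.eigenvalues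
      * star (hB.eigenvectorUnitary : Matrix (Fin n) (Fin n) ℝ) := by
  simpa using hB.spectral_theorem

lemma quad_le_sSup (hn : 1 ≤ n) {B : Matrix (Fin n) (Fin n) ℝ} (hB : B.IsHermitian)
    (x : Fin n → ℝ) :
    x ⬝ᵥ (B *ᵥ x) ≤ sSup (spectrum ℝ B) * (x ⬝ᵥ x) := by
  have h1 : hB.eigenvalues ≤ (fun _ => sSup (spectrum ℝ B)) := fun i =>
    (isGreatest_spec hn hB).2 (hB.eigenvalues_mem_spectrum_real i)
  have h2 := conj_diag_sub hB.eigenvectorUnitary hB.eigenvalues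
    (fun _ => sSup (spectrum ℝ B)) h1 x
  rw [← spectral_real hB, ← smul_one_conj] at h2
  simpa [smul_mulVec, one_mulVec, dotProduct_smul, smul_eq_mul] using h2

lemma quad_ge_sInf (hn : 1 ≤ n) {B : Matrix (Fin n) (Fin n) ℝ} (hB : B.IsHermitian)
    (x : Fin n → ℝ) :
    sInf (spectrum ℝ B) * (x ⬝ᵥ x) ≤ x ⬝ᵥ (B *ᵥ x) := by
  have h1 : (fun _ => sInf (spectrum ℝ B)) ≤ hB.eigenvalues := fun i =>
    (isLeast_spec hn hB).2 (hB.eigenvalues_mem_spectrum_real i)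
  have h2 := conj_diag_sub hB.eigenvectorUnitary (fun _ => sInf (spectrum ℝ B))
    hB.eigenvalues h1 x
  rw [← spectral_real hB, ← smul_one_conj] at h2
  simpa [smul_mulVec, one_mulVec, dotProduct_smul, smul_eq_mul] using h2

lemma sq_rep {S : Matrix (Fin n) (Fin n) ℝ} (hS : S.IsHermitian) :
    S * S = (hS.eigenvectorUnitary : Matrix (Fin n) (Fin n) ℝ) *
      diagonal (fun i => hS.eigenvalues i * hS.eigenvalues i)
      * star (hS.eigenvectorUnitary : Matrix (Fin n) (Fin n) ℝ) := by
  conv_lhs => rw [spectral_real hS]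
  rw [conj_mul]

lemma quad_sq_ge (hn : 1 ≤ n) {S : Matrix (Fin n) (Fin n) ℝ} (hS : S.PosDef) (x : Fin n → ℝ) :
    (sInf (spectrum ℝ S))^2 * (x ⬝ᵥ x) ≤ x ⬝ᵥ ((S * S) *ᵥ x) := by
  have hm : 0 < sInf (spectrum ℝ S) := sInf_spec_pos hn hS
  have h1 : (fun _ => (sInf (spectrum ℝ S))^2) ≤
      (fun i => hS.1.eigenvalues i * hS.1.eigenvalues i) := by
    intro i
    have hle : sInf (spectrum ℝ S) ≤ hS.1.eigenvalues i :=
      (isLeast_spec hn hS.1).2 (hS.1.eigenvalues_mem_spectrum_real i)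
    have := mul_le_mul hle hle hm.le (le_trans hm.le hle)
    simpa [pow_two] using this
  have h2 := conj_diag_sub hS.1.eigenvectorUnitary (fun _ => (sInf (spectrum ℝ S))^2)
    (fun i => hS.1.eigenvalues i * hS.1.eigenvalues i) h1 x
  rw [← sq_rep hS.1, ← smul_one_conj] at h2
  simpa [smul_mulVec, one_mulVec, dotProduct_smul, smul_eq_mul] using h2

lemma quad_sq_le (hn : 1 ≤ n) {S : Matrix (Fin n) (Fin n) ℝ} (hS : S.PosDef) (x : Fin n → ℝ) :
    x ⬝ᵥ ((S * S) *ᵥ x) ≤ (sSup (spectrum ℝ S))^2 * (x ⬝ᵥ x) := by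
  have hm : 0 < sInf (spectrum ℝ S) := sInf_spec_pos hn hS
  have h1 : (fun i => hS.1.eigenvalues i * hS.1.eigenvalues i) ≤
      (fun _ => (sSup (spectrum ℝ S))^2) := by
    intro i
    have hle : hS.1.eigenvalues i ≤ sSup (spectrum ℝ S) :=
      (isGreatest_spec hn hS.1).2 (hS.1.eigenvalues_mem_spectrum_real i)
    have hpos : (0:ℝ) < hS.1.eigenvalues i := hS.eigenvalues_pos i
    have := mul_le_mul hle hle hpos.le (le_trans hpos.le hle)
    simpa [pow_two] using this
  have h2 := conj_diag_sub hS.1.eigenvectorUnitary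
    (fun i => hS.1.eigenvalues i * hS.1.eigenvalues i)
    (fun _ => (sSup (spectrum ℝ S))^2) h1 x
  rw [← sq_rep hS.1, ← smul_one_conj] at h2
  simpa [smul_mulVec, one_mulVec, dotProduct_smul, smul_eq_mul] using h2

lemma dp_self_pos {x : Fin n → ℝ} (hx : x ≠ 0) : 0 < x ⬝ᵥ x := by
  have h0 : 0 ≤ x ⬝ᵥ x := Finset.sum_nonneg fun i _ => mul_self_nonneg _
  rcases h0.lt_or_eq with h | h
  · exact h
  · exact absurd (dotProduct_self_eq_zero.mp h.symm) hx



lemma lower_bound (hn : 1 ≤ n) {A S : Matrix (Fin n) (Fin n) ℝ} (hA : A.PosDef)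
    (hS : S.PosDef) {C : ℝ} (hC : 1 ≤ C) (hSC : condNum S ≤ C) :
    max (condNum A / C ^ 2) 1 ≤ condNum (S * A * S) := by
  have hCpos : (0:ℝ) < C := lt_of_lt_of_le one_pos hC
  set P := S * A * S with hPdef
  have hP : P.PosDef := by
    have := posdef_conj hA hS.isUnit
    rwa [hS.1.eq] at this
  set mA := sInf (spectrum ℝ A); set MA := sSup (spectrum ℝ A)
  set mS := sInf (spectrum ℝ S); set MS := sSup (spectrum ℝ S)
  set mP := sInf (spectrum ℝ P); set MP := sSup (spectrum ℝ P)
  have hmA : 0 < mA := sInf_spec_pos hn hA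
  have hmS : 0 < mS := sInf_spec_pos hn hS
  have hmP : 0 < mP := sInf_spec_pos hn hP
  have hMA : 0 < MA := lt_of_lt_of_le hmA ((isGreatest_spec hn hA.1).2 (isLeast_spec hn hA.1).1)
  have hMS : 0 < MS := lt_of_lt_of_le hmS ((isGreatest_spec hn hS.1).2 (isLeast_spec hn hS.1).1)
  have hmPMP : mP ≤ MP := (isGreatest_spec hn hP.1).2 (isLeast_spec hn hP.1).1
  have hCS : MS ≤ C * mS := (div_le_iff₀ hmS).mp hSC
  have hdet : IsUnit S.det := hS.det_pos.ne'.isUnit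
  have hSinv : S * S⁻¹ = 1 := Matrix.mul_nonsing_inv _ hdet
  -- step A : MA * mS^2 ≤ MP
  have stepA : MA * mS ^ 2 ≤ MP := by
    obtain ⟨i1, hi1⟩ : MA ∈ Set.range hA.1.eigenvalues := by
      rw [← hA.1.spectrum_real_eq_range_eigenvalues]; exact (isGreatest_spec hn hA.1).1
    obtain ⟨v, hv0, hv⟩ := eigvec_exists A hA.1 i1
    rw [hi1] at hv
    set x := S⁻¹ *ᵥ v with hxdef
    have hSx : S *ᵥ x = v := by rw [hxdef, mulVec_mulVec, hSinv, one_mulVec]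
    have hx0 : x ≠ 0 := fun h => hv0 (by rw [← hSx, h, mulVec_zero])
    have e1 : x ⬝ᵥ (P *ᵥ x) = MA * (v ⬝ᵥ v) := by
      rw [hPdef, conj_quad S A hS.1, hSx, hv, dotProduct_smul, smul_eq_mul]
    have e2 := quad_le_sSup hn hP.1 x
    have e3 : mS ^ 2 * (x ⬝ᵥ x) ≤ v ⬝ᵥ v := by
      have h4 : x ⬝ᵥ ((S * S) *ᵥ x) = v ⬝ᵥ v := by
        have h5 := conj_quad S 1 hS.1 x
        rw [Matrix.mul_one, hSx, one_mulVec] at h5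
        exact h5
      have := quad_sq_ge hn hS x
      linarith
    have hxx := dp_self_pos hx0
    have h5 : MA * (v ⬝ᵥ v) ≤ MP * (x ⬝ᵥ x) := e1 ▸ e2
    have h6 : MA * mS ^ 2 * (x ⬝ᵥ x) ≤ MP * (x ⬝ᵥ x) := by
      calc MA * mS ^ 2 * (x ⬝ᵥ x) = MA * (mS ^ 2 * (x ⬝ᵥ x)) := by ring
      _ ≤ MA * (v ⬝ᵥ v) := by
          exact mul_le_mul_of_nonneg_left e3 hMA.le
      _ ≤ MP * (x ⬝ᵥ x) := h5
    exact le_of_mul_le_mul_right h6 hxx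
  -- step B : mP ≤ mA * MS^2
  have stepB : mP ≤ mA * MS ^ 2 := by
    obtain ⟨i0, hi0⟩ : mA ∈ Set.range hA.1.eigenvalues := by
      rw [← hA.1.spectrum_real_eq_range_eigenvalues]; exact (isLeast_spec hn hA.1).1
    obtain ⟨w, hw0, hw⟩ := eigvec_exists A hA.1 i0
    rw [hi0] at hw
    set y := S⁻¹ *ᵥ w with hydef
    have hSy : S *ᵥ y = w := by rw [hydef, mulVec_mulVec, hSinv, one_mulVec]
    have hy0 : y ≠ 0 := fun h => hw0 (by rw [← hSy, h, mulVec_zero])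
    have e1 : y ⬝ᵥ (P *ᵥ y) = mA * (w ⬝ᵥ w) := by
      rw [hPdef, conj_quad S A hS.1, hSy, hw, dotProduct_smul, smul_eq_mul]
    have e2 := quad_ge_sInf hn hP.1 y
    have e3 : w ⬝ᵥ w ≤ MS ^ 2 * (y ⬝ᵥ y) := by
      have h4 : y ⬝ᵥ ((S * S) *ᵥ y) = w ⬝ᵥ w := by
        have h5 := conj_quad S 1 hS.1 y
        rw [Matrix.mul_one, hSy, one_mulVec] at h5
        exact h5
      have := quad_sq_le hn hS y
      linarith
    have hyy := dp_self_pos hy0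
    have h5 : mP * (y ⬝ᵥ y) ≤ mA * (w ⬝ᵥ w) := e1 ▸ e2
    have h6 : mP * (y ⬝ᵥ y) ≤ mA * MS ^ 2 * (y ⬝ᵥ y) := by
      calc mP * (y ⬝ᵥ y) ≤ mA * (w ⬝ᵥ w) := h5
      _ ≤ mA * (MS ^ 2 * (y ⬝ᵥ y)) := mul_le_mul_of_nonneg_left e3 hmA.le
      _ = mA * MS ^ 2 * (y ⬝ᵥ y) := by ring
    exact le_of_mul_le_mul_right h6 hyy
  have hMS2 : MS ^ 2 ≤ C ^ 2 * mS ^ 2 := by nlinarith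
  apply max_le
  · show MA / mA / C ^ 2 ≤ MP / mP
    rw [div_div, div_le_div_iff₀ (by positivity) hmP]
    nlinarith [mul_le_mul_of_nonneg_left stepB hMA.le,
      mul_le_mul_of_nonneg_left hMS2 (mul_pos hMA hmA).le,
      mul_le_mul_of_nonneg_right stepA (mul_pos hmA (pow_pos hCpos 2)).le]
  · show (1:ℝ) ≤ MP / mP
    exact (one_le_div hmP).mpr hmPMP

lemma mem_part (hn : 1 ≤ n) {A : Matrix (Fin n) (Fin n) ℝ} (hA : A.PosDef)
    {C : ℝ} (hC : 1 ≤ C) :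
    ∃ S : Matrix (Fin n) (Fin n) ℝ, S.PosDef ∧ condNum S ≤ C ∧
      max (condNum A / C ^ 2) 1 = condNum (S * A * S) := by
  classical
  have hCpos : (0:ℝ) < C := lt_of_lt_of_le one_pos hC
  set mA := sInf (spectrum ℝ A) with hmAdef
  set MA := sSup (spectrum ℝ A) with hMAdef
  have hmA : 0 < mA := sInf_spec_pos hn hA
  have hMA : 0 < MA := lt_of_lt_of_le hmA ((isGreatest_spec hn hA.1).2 (isLeast_spec hn hA.1).1)
  have hsM : Real.sqrt MA * Real.sqrt MA = MA := Real.mul_self_sqrt hMA.le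
  have hsMpos : 0 < Real.sqrt MA := Real.sqrt_pos.mpr hMA
  set eig := hA.1.eigenvalues with heig
  set Um : Matrix (Fin n) (Fin n) ℝ := (hA.1.eigenvectorUnitary : Matrix (Fin n) (Fin n) ℝ)
    with hUm
  set g : ℝ → ℝ := fun t => min (Real.sqrt t)⁻¹ (C / Real.sqrt MA) with hg
  -- basic bounds on eigenvalues
  have heig_pos : ∀ i, 0 < eig i := fun i => hA.eigenvalues_pos i
  have heig_le : ∀ i, eig i ≤ MA := fun i =>
    (isGreatest_spec hn hA.1).2 (hA.1.eigenvalues_mem_spectrum_real i)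
  have heig_ge : ∀ i, mA ≤ eig i := fun i =>
    (isLeast_spec hn hA.1).2 (hA.1.eigenvalues_mem_spectrum_real i)
  obtain ⟨i0, hi0⟩ : mA ∈ Set.range eig := by
    rw [heig, ← hA.1.spectrum_real_eq_range_eigenvalues]; exact (isLeast_spec hn hA.1).1
  obtain ⟨i1, hi1⟩ : MA ∈ Set.range eig := by
    rw [heig, ← hA.1.spectrum_real_eq_range_eigenvalues]; exact (isGreatest_spec hn hA.1).1
  have hg_pos : ∀ t, 0 < t → 0 < g t := fun t ht =>
    lt_min (inv_pos.mpr (Real.sqrt_pos.mpr ht)) (div_pos hCpos hsMpos)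
  -- g is antitone on positives
  have hg_anti : ∀ s t : ℝ, 0 < s → s ≤ t → g t ≤ g s := by
    intro s t hs hst
    apply min_le_min _ le_rfl
    exact inv_anti₀ (Real.sqrt_pos.mpr hs) (Real.sqrt_le_sqrt hst)
  set S : Matrix (Fin n) (Fin n) ℝ := Um * diagonal (fun i => g (eig i)) * star Um with hSdef
  have hupos : ∀ i, (0:ℝ) < g (eig i) := fun i => hg_pos _ (heig_pos i)
  have hDpd : (diagonal (fun i => g (eig i))).PosDef := Matrix.PosDef.diagonal hupos
  have hUstar : IsUnit (star Um) := by
    have h1 : star Um * Um = 1 := (Matrix.mem_unitaryGroup_iff').mp hA.1.eigenvectorUnitary.2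
    exact Matrix.isUnit_iff_isUnit_det _ |>.mpr (IsUnit.of_mul_eq_one Um.det (by
      rw [← Matrix.det_mul, h1, Matrix.det_one]))
  have hSpd : S.PosDef := by
    have := posdef_conj hDpd hUstar
    rw [hSdef]
    rwa [show (star Um)ᴴ = Um from by
      rw [Matrix.star_eq_conjTranspose, conjTranspose_conjTranspose]] at this
  -- spectrum of S
  have hspecS : spectrum ℝ S = Set.range (fun i => g (eig i)) := by
    rw [hSdef, hUm, Unitary.spectrum_star_right_conjugate, spectrum_diagonal]
  have hgm_greatest : IsGreatest (Set.range fun i => g (eig i)) (g mA) :=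
    ⟨⟨i0, congrArg g hi0⟩, by rintro y ⟨i, rfl⟩; exact hg_anti mA (eig i) hmA (heig_ge i)⟩
  have hgM_least : IsLeast (Set.range fun i => g (eig i)) (g MA) :=
    ⟨⟨i1, congrArg g hi1⟩, by
      rintro y ⟨i, rfl⟩; exact hg_anti (eig i) MA (heig_pos i) (heig_le i)⟩
  have hgMval : g MA = (Real.sqrt MA)⁻¹ := by
    apply min_eq_left
    rw [inv_eq_one_div]
    gcongr
  have hcondS : condNum S = g mA / g MA := by
    unfold condNum
    rw [hspecS, hgm_greatest.csSup_eq, hgM_least.csInf_eq]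
  have hcondS_le : condNum S ≤ C := by
    rw [hcondS, div_le_iff₀ (hg_pos _ hMA)]
    calc g mA ≤ C / Real.sqrt MA := min_le_right _ _
    _ = C * g MA := by rw [hgMval, div_eq_mul_inv]
  -- S * A * S
  have hSAS : S * A * S = Um * diagonal (fun i => g (eig i) * eig i * g (eig i)) * star Um := by
    conv_lhs => rw [hSdef, show A = Um * diagonal eig * star Um from spectral_real hA.1]
    rw [hUm, conj_mul, conj_mul]
  have hvals : ∀ i, g (eig i) * eig i * g (eig i) = min 1 (C ^ 2 * eig i / MA) := by
    intro i
    set t := eig i with ht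
    have htpos : 0 < t := heig_pos i
    have hst : Real.sqrt t * Real.sqrt t = t := Real.mul_self_sqrt htpos.le
    have hstpos : 0 < Real.sqrt t := Real.sqrt_pos.mpr htpos
    rcases le_total ((Real.sqrt t)⁻¹) (C / Real.sqrt MA) with h | h
    · have hgt : g t = (Real.sqrt t)⁻¹ := min_eq_left h
      have h7 : 1 * Real.sqrt MA ≤ C * Real.sqrt t := by
        rw [← div_le_div_iff₀ hstpos hsMpos, ← inv_eq_one_div]
        exact h
      have h8 : MA ≤ C ^ 2 * t := by
        nlinarith [mul_le_mul h7 h7 (by positivity) (by positivity : (0:ℝ) ≤ C * Real.sqrt t)]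
      have h9 : (1:ℝ) ≤ C ^ 2 * t / MA := (one_le_div hMA).mpr h8
      rw [hgt, min_eq_left h9]
      field_simp
      rw [sq, hst]
    · have hgt : g t = C / Real.sqrt MA := min_eq_right h
      have h7 : C * Real.sqrt t ≤ 1 * Real.sqrt MA := by
        rw [← div_le_div_iff₀ hsMpos hstpos, ← inv_eq_one_div]
        exact h
      have h8 : C ^ 2 * t ≤ MA := by
        nlinarith [mul_le_mul h7 h7 (by positivity) (by positivity : (0:ℝ) ≤ 1 * Real.sqrt MA)]
      have h9 : C ^ 2 * t / MA ≤ 1 := (div_le_one hMA).mpr h8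
      rw [hgt, min_eq_right h9]
      field_simp
      ring
      rw [sq, hsM]
  have hspecSAS : spectrum ℝ (S * A * S) = Set.range (fun i => min 1 (C ^ 2 * eig i / MA)) := by
    rw [hSAS, hUm, Unitary.spectrum_star_right_conjugate, spectrum_diagonal]
    exact congrArg Set.range (funext hvals)
  have hgreat : IsGreatest (Set.range fun i => min 1 (C ^ 2 * eig i / MA)) 1 := by
    constructor
    · refine ⟨i1, ?_⟩
      show min 1 (C ^ 2 * eig i1 / MA) = 1
      rw [hi1, mul_div_assoc, div_self hMA.ne', mul_one]
      exact min_eq_left (by nlinarith)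
    · rintro y ⟨i, rfl⟩; exact min_le_left _ _
  have hleast : IsLeast (Set.range fun i => min 1 (C ^ 2 * eig i / MA))
      (min 1 (C ^ 2 * mA / MA)) := by
    constructor
    · exact ⟨i0, by show min 1 (C ^ 2 * eig i0 / MA) = _; rw [hi0]⟩
    · rintro y ⟨i, rfl⟩
      show min 1 (C ^ 2 * mA / MA) ≤ min 1 (C ^ 2 * eig i / MA)
      apply min_le_min le_rfl
      gcongr
      exact heig_ge i
  have hcondSAS : condNum (S * A * S) = 1 / min 1 (C ^ 2 * mA / MA) := by
    unfold condNum
    rw [hspecSAS, hgreat.csSup_eq, hleast.csInf_eq]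
  have hcondA : condNum A = MA / mA := rfl
  refine ⟨S, hSpd, hcondS_le, ?_⟩
  rw [hcondSAS, hcondA]
  rcases le_total (C ^ 2 * mA) MA with h | h
  · rw [min_eq_right ((div_le_one hMA).mpr h), one_div_div, max_eq_left]
    · rw [div_div, mul_comm]
    · rw [div_div, one_le_div (by positivity)]
      nlinarith
  · rw [min_eq_left ((one_le_div hMA).mpr h), div_one, max_eq_right]
    rw [div_div, div_le_one (by positivity)]
    nlinarith

end CondNumAux

theorem stmt_0 {n : ℕ} (hn : 1 ≤ n) (A : Matrix (Fin n) (Fin n) ℝ) (hA : A.PosDef)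
    (C : ℝ) (hC : 1 ≤ C) :
    IsLeast {x : ℝ | ∃ S : Matrix (Fin n) (Fin n) ℝ,
        S.PosDef ∧ condNum S ≤ C ∧ x = condNum (S * A * S)}
      (max (condNum A / C ^ 2) 1) := by
  constructor
  · obtain ⟨S, h1, h2, h3⟩ := CondNumAux.mem_part hn hA hC
    exact ⟨S, h1, h2, h3⟩
  · rintro x ⟨S, hS, hSC, rfl⟩
    exact CondNumAux.lower_bound hn hA hS hC hSC
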